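/- For every δ ∈ (0,1) and all constants 0 < A₁ < A₂ < ∞, one has lim_{t→∞} inf { e^{(x² − (y+x)²)/(16√t)} · (1/(y t^{1/4})) · (1 − e^{−2y(−x + (3/(2√2)) log(9√t))/(8√t)}) : y ∈ [A₁ t^{1/4}, A₂ t^{1/4}], x ≤ −√t/δ } = +∞. That is, for every M > 0 there exists t₀ such that for all t ≥ t₀, all y ∈ [A₁ t^{1/4}, A₂ t^{1/4}] and all x ≤ −√t/δ, the displayed expression is at least M. -/

import Mathlib

open Real Filter

set_option maxHeartbeats 1000000

/-- Key uniform divergence in the proof of Lemma 3.7 (small-term): uniformly over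
`y ∈ [A₁ t^{1/4}, A₂ t^{1/4}]` and `x ≤ −√t/δ`, the quantity
`e^{(x² − (y+x)²)/(16√t)} · (1/(y t^{1/4})) · (1 − e^{−2y(−x + (3/(2√2)) log(9√t))/(8√t)})`
tends to `+∞` as `t → ∞`. -/
theorem uniform_divergence (δ A₁ A₂ : ℝ) (hδ : δ ∈ Set.Ioo (0 : ℝ) 1)
    (hA₁ : 0 < A₁) (hA₁₂ : A₁ < A₂) :
    ∀ M > (0 : ℝ), ∃ t₀ > (0 : ℝ), ∀ t ≥ t₀,
      ∀ y ∈ Set.Icc (A₁ * t ^ ((1 : ℝ) / 4)) (A₂ * t ^ ((1 : ℝ) / 4)),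
        ∀ x : ℝ, x ≤ -(Real.sqrt t / δ) →
          M ≤ Real.exp ((x ^ 2 - (y + x) ^ 2) / (16 * Real.sqrt t)) *
                (1 / (y * t ^ ((1 : ℝ) / 4))) *
                (1 - Real.exp (-(2 * y) *
                  (-x + 3 / (2 * Real.sqrt 2) * Real.log (9 * Real.sqrt t)) /
                    (8 * Real.sqrt t))) := by
  intro M hM
  have hA₂ : 0 < A₂ := hA₁.trans hA₁₂
  -- the map t ↦ t^{1/4} tends to ∞
  have hq : Tendsto (fun t : ℝ => t ^ ((1 : ℝ) / 4)) atTop atTop :=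
    tendsto_rpow_atTop (by norm_num)
  -- eventual condition C4 : 2*M*A₂*u^2 ≤ exp(A₁*u/16)
  have hC4' : ∀ᶠ u : ℝ in atTop, 2 * M * A₂ * u ^ (2 : ℕ) ≤ Real.exp (A₁ * u / 16) := by
    have h := tendsto_exp_mul_div_rpow_atTop 2 (A₁ / 16) (by positivity)
    filter_upwards [h.eventually_ge_atTop (2 * M * A₂), eventually_gt_atTop (0 : ℝ)]
      with u hu1 hu2
    have hpow : u ^ ((2 : ℝ)) = u ^ (2 : ℕ) := by
      rw [show (2 : ℝ) = ((2 : ℕ) : ℝ) by norm_num, Real.rpow_natCast]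
    have hup : (0 : ℝ) < u ^ ((2 : ℝ)) := by rw [hpow]; positivity
    rw [le_div_iff₀ hup] at hu1
    calc 2 * M * A₂ * u ^ (2 : ℕ) = 2 * M * A₂ * u ^ ((2 : ℝ)) := by rw [hpow]
      _ ≤ Real.exp (A₁ / 16 * u) := hu1
      _ = Real.exp (A₁ * u / 16) := by ring_nf
  -- eventual condition C3 : exp(-(A₁u)/4) ≤ 1/2
  have hC3' : ∀ᶠ u : ℝ in atTop, Real.exp (-(A₁ * u) / 4) ≤ 1 / 2 := by
    filter_upwards [eventually_ge_atTop (4 * Real.log 2 / A₁)] with u hu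
    have hlog : -(A₁ * u) / 4 ≤ Real.log (1 / 2) := by
      rw [Real.log_div one_ne_zero two_ne_zero, Real.log_one]
      rw [div_le_iff₀ hA₁] at hu
      nlinarith
    calc Real.exp (-(A₁ * u) / 4) ≤ Real.exp (Real.log (1 / 2)) := Real.exp_le_exp.2 hlog
      _ = 1 / 2 := Real.exp_log (by norm_num)
  have hEv : ∀ᶠ t : ℝ in atTop,
      (1 ≤ t ∧ A₂ ≤ t ^ ((1 : ℝ) / 4)) ∧
      (2 * M * A₂ * (t ^ ((1 : ℝ) / 4)) ^ (2 : ℕ) ≤ Real.exp (A₁ * t ^ ((1 : ℝ) / 4) / 16) ∧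
       Real.exp (-(A₁ * t ^ ((1 : ℝ) / 4)) / 4) ≤ 1 / 2) :=
    ((eventually_ge_atTop 1).and (hq.eventually_ge_atTop A₂)).and
      ((hq.eventually hC4').and (hq.eventually hC3'))
  obtain ⟨a, ha⟩ := eventually_atTop.1 hEv
  refine ⟨max a 1, lt_of_lt_of_le one_pos (le_max_right _ _), ?_⟩
  intro t ht y hy x hx
  obtain ⟨⟨ht1, hA2q⟩, hC4, hC3⟩ := ha t (le_trans (le_max_left _ _) ht)
  have htpos : (0 : ℝ) < t := lt_of_lt_of_le one_pos ht1
  set q := t ^ ((1 : ℝ) / 4) with hqdef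
  set s := Real.sqrt t with hsdef
  have hqpos : 0 < q := Real.rpow_pos_of_pos htpos _
  have hs_eq : s = q ^ 2 := by
    rw [hsdef, hqdef, Real.sqrt_eq_rpow, ← Real.rpow_natCast (t ^ ((1 : ℝ) / 4)) 2,
      ← Real.rpow_mul htpos.le]
    norm_num
  have hspos : 0 < s := by rw [hs_eq]; positivity
  have hs1 : (1 : ℝ) ≤ s := by
    rw [hsdef]; exact Real.one_le_sqrt.2 ht1
  have hypos : 0 < y := lt_of_lt_of_le (by positivity) hy.1
  -- -x ≥ s
  have hxs : s ≤ -x := by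
    have h1 : s ≤ s / δ := by
      rw [le_div_iff₀ hδ.1]; nlinarith [hδ.2]
    linarith
  -- y ≤ s
  have hys : y ≤ s := by
    have h1 : A₂ * q ≤ q * q := by nlinarith
    nlinarith [hy.2, hs_eq]
  -- lower bound for factor 1
  have hE1 : Real.exp (A₁ * q / 16) ≤ Real.exp ((x ^ 2 - (y + x) ^ 2) / (16 * s)) := by
    apply Real.exp_le_exp.2
    have hnum : A₁ * q * s ≤ x ^ 2 - (y + x) ^ 2 := by
      have h1 : x ^ 2 - (y + x) ^ 2 = y * (-2 * x - y) := by ring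
      rw [h1]
      nlinarith [hy.1]
    calc A₁ * q / 16 = A₁ * q * s / (16 * s) := by field_simp
      _ ≤ (x ^ 2 - (y + x) ^ 2) / (16 * s) :=
        div_le_div_of_nonneg_right hnum (by positivity) |>.trans_eq rfl
  -- lower bound for factor 2
  have hE2 : 1 / (A₂ * q * q) ≤ 1 / (y * q) := by
    apply one_div_le_one_div_of_le (by positivity)
    nlinarith [hy.2]
  -- lower bound for factor 3
  have hE3 : (1 : ℝ) / 2 ≤ 1 - Real.exp (-(2 * y) *
      (-x + 3 / (2 * Real.sqrt 2) * Real.log (9 * s)) / (8 * s)) := by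
    have hlog9 : 0 ≤ Real.log (9 * s) := Real.log_nonneg (by nlinarith)
    have hc : 0 ≤ 3 / (2 * Real.sqrt 2) * Real.log (9 * s) := by
      have := Real.sqrt_pos.2 (show (0:ℝ) < 2 by norm_num)
      positivity
    have hL : s ≤ -x + 3 / (2 * Real.sqrt 2) * Real.log (9 * s) := by linarith
    have hexp : Real.exp (-(2 * y) *
        (-x + 3 / (2 * Real.sqrt 2) * Real.log (9 * s)) / (8 * s)) ≤
        Real.exp (-(A₁ * q) / 4) := by
      apply Real.exp_le_exp.2
      have hnum : 2 * (A₁ * q) * s ≤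
          2 * y * (-x + 3 / (2 * Real.sqrt 2) * Real.log (9 * s)) := by
        have h1 := mul_le_mul_of_nonneg_right
          (show 2 * (A₁ * q) ≤ 2 * y by linarith [hy.1]) hspos.le
        have h2 := mul_le_mul_of_nonneg_left hL (show (0:ℝ) ≤ 2 * y by linarith)
        linarith
      calc -(2 * y) * (-x + 3 / (2 * Real.sqrt 2) * Real.log (9 * s)) / (8 * s)
          ≤ -(2 * (A₁ * q) * s) / (8 * s) :=
            div_le_div_of_nonneg_right (by linarith) (by positivity)
        _ = -(A₁ * q) / 4 := by
            rw [div_eq_div_iff (by positivity : (8*s) ≠ 0) (by norm_num : (4:ℝ) ≠ 0)]; ring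
    linarith [hC3, hexp]
  -- assemble
  have hM' : M ≤ Real.exp (A₁ * q / 16) * (1 / (A₂ * q * q)) * (1 / 2) := by
    have hq0 : q ≠ 0 := hqpos.ne'
    have hA20 : A₂ ≠ 0 := hA₂.ne'
    have hEq : ∀ E : ℝ, E * (1 / (A₂ * q * q)) * (1 / 2) = E / (2 * (A₂ * q * q)) := by
      intro E; field_simp
    rw [hEq, le_div_iff₀ (by positivity)]
    have hsq : q ^ 2 = q * q := sq q
    nlinarith [hC4]
  calc M ≤ Real.exp (A₁ * q / 16) * (1 / (A₂ * q * q)) * (1 / 2) := hM'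
    _ ≤ Real.exp ((x ^ 2 - (y + x) ^ 2) / (16 * s)) * (1 / (y * q)) *
        (1 - Real.exp (-(2 * y) *
          (-x + 3 / (2 * Real.sqrt 2) * Real.log (9 * s)) / (8 * s))) := by
      apply mul_le_mul (mul_le_mul hE1 hE2 (by positivity) (Real.exp_pos _).le) hE3
        (by norm_num) (by positivity)
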